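/- Let G be a countable amenable group with Følner sequence (F_n), (X, μ) a probability space, and (u_g)_{g∈G} a bounded family in L²(μ) (say ‖u_g‖ ≤ 1 for all g). Then limsup_n ‖(1/|F_n|) Σ_{g∈F_n} u_g‖² ≤ limsup_m (1/|F_m|²) Σ_{h,k ∈ F_m} limsup_n |(1/|F_n|) Σ_{g∈F_n} ⟨u_{hg}, u_{kg}⟩|. -/

import Mathlib

open Filter
open scoped symmDiff InnerProductSpace

lemma vdc_bddU {f : ℕ → ℝ} {b : ℝ} (h : ∀ n, f n ≤ b) :
    IsBoundedUnder (· ≤ ·) (atTop : Filter ℕ) f := isBoundedUnder_of ⟨b, h⟩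

lemma vdc_bddL {f : ℕ → ℝ} {b : ℝ} (h : ∀ n, b ≤ f n) :
    IsBoundedUnder (· ≥ ·) (atTop : Filter ℕ) f := isBoundedUnder_of ⟨b, h⟩

lemma vdc_limsup_sum_le {ι : Type*} (s : Finset ι) (f : ι → ℕ → ℝ) (b : ℝ)
    (h0 : ∀ i ∈ s, ∀ n, 0 ≤ f i n) (h1 : ∀ i ∈ s, ∀ n, f i n ≤ b) :
    limsup (fun n => ∑ i ∈ s, f i n) atTop ≤ ∑ i ∈ s, limsup (fun n => f i n) atTop := by
  classical
  induction s using Finset.induction_on with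
  | empty => simp
  | @insert a s ha ih =>
    have h0' : ∀ i ∈ s, ∀ n, 0 ≤ f i n := fun i hi => h0 i (Finset.mem_insert_of_mem hi)
    have h1' : ∀ i ∈ s, ∀ n, f i n ≤ b := fun i hi => h1 i (Finset.mem_insert_of_mem hi)
    have hsum0 : ∀ n, 0 ≤ ∑ i ∈ s, f i n :=
      fun n => Finset.sum_nonneg fun i hi => h0' i hi n
    have hsum1 : ∀ n, ∑ i ∈ s, f i n ≤ s.card * b := fun n => by
      calc ∑ i ∈ s, f i n ≤ ∑ _i ∈ s, b := Finset.sum_le_sum fun i hi => h1' i hi n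
      _ = s.card * b := by simp [Finset.sum_const, nsmul_eq_mul]
    have key : limsup (fun n => f a n + ∑ i ∈ s, f i n) atTop ≤
        limsup (fun n => f a n) atTop + limsup (fun n => ∑ i ∈ s, f i n) atTop :=
      limsup_add_le (vdc_bddL (fun n => h0 a (Finset.mem_insert_self a s) n))
        (vdc_bddU (fun n => h1 a (Finset.mem_insert_self a s) n))
        ((vdc_bddL hsum0).isCoboundedUnder_le) (vdc_bddU hsum1)
    simp only [Finset.sum_insert ha]
    exact key.trans (by gcongr; exact ih h0' h1')

lemma vdc_limsup_const_mul (c : ℝ) (hc : 0 ≤ c) (f : ℕ → ℝ)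
    (bdd : IsBoundedUnder (· ≤ ·) (atTop : Filter ℕ) f)
    (cobdd : IsCoboundedUnder (· ≤ ·) (atTop : Filter ℕ) f) :
    limsup (fun n => c * f n) atTop = c * limsup f atTop :=
  (Monotone.map_limsSup_of_continuousAt (F := (atTop : Filter ℕ).map f) (f := fun x => c * x)
    (fun _ _ h => mul_le_mul_of_nonneg_left h hc) (continuous_mul_left c).continuousAt
    bdd cobdd).symm

lemma vdc_avg_norm_le {H : Type} [NormedAddCommGroup H] [NormedSpace ℝ H] {G : Type}
    (s : Finset G) (w : G → H)
    (hw : ∀ g, ‖w g‖ ≤ 1) : ‖((s.card : ℝ))⁻¹ • ∑ g ∈ s, w g‖ ≤ 1 := by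
  rw [norm_smul, norm_inv, Real.norm_natCast]
  have h1 : ‖∑ g ∈ s, w g‖ ≤ (s.card : ℝ) := by
    calc ‖∑ g ∈ s, w g‖ ≤ ∑ g ∈ s, ‖w g‖ := norm_sum_le _ _
    _ ≤ ∑ _g ∈ s, (1:ℝ) := Finset.sum_le_sum fun g _ => hw g
    _ = s.card := by simp
  rcases Nat.eq_zero_or_pos s.card with h | h
  · simp [h]
  · have hpos : (0:ℝ) < s.card := by exact_mod_cast h
    rw [inv_mul_le_iff₀ hpos, mul_one]
    exact h1

lemma vdc_avg_abs_le {G : Type} (s : Finset G) (w : G → ℝ) (hw : ∀ g, |w g| ≤ 1) :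
    |((s.card : ℝ))⁻¹ * ∑ g ∈ s, w g| ≤ 1 := by
  have := vdc_avg_norm_le (H := ℝ) s w (by simpa [Real.norm_eq_abs] using hw)
  rw [abs_mul, abs_inv, Nat.abs_cast]
  simpa [Real.norm_eq_abs, smul_eq_mul, abs_inv, Nat.abs_cast] using this

section Key

variable {G : Type} [Group G] [DecidableEq G]
    {H : Type} [NormedAddCommGroup H] [InnerProductSpace ℝ H]

/-- norm of sum difference bounded by symmetric difference cardinality -/
lemma vdc_sum_diff_le (u : G → H) (hu : ∀ g, ‖u g‖ ≤ 1) (s t : Finset G) :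
    ‖(∑ g ∈ s, u g) - ∑ g ∈ t, u g‖ ≤ ((t ∆ s).card : ℝ) := by
  rw [← Finset.sum_sdiff_sub_sum_sdiff]
  have hcd : ((t ∆ s).card : ℝ) = ((t \ s).card : ℝ) + ((s \ t).card : ℝ) := by
    rw [symmDiff_def, Finset.sup_eq_union, Finset.card_union_of_disjoint disjoint_sdiff_sdiff]
    push_cast; ring
  rw [hcd]
  have key : ∀ r : Finset G, ‖∑ g ∈ r, u g‖ ≤ (r.card : ℝ) := fun r => by
    calc ‖∑ g ∈ r, u g‖ ≤ ∑ g ∈ r, ‖u g‖ := norm_sum_le _ _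
    _ ≤ ∑ _g ∈ r, (1:ℝ) := Finset.sum_le_sum fun g _ => hu g
    _ = r.card := by simp
  calc ‖(∑ g ∈ s \ t, u g) - ∑ g ∈ t \ s, u g‖
      ≤ ‖∑ g ∈ s \ t, u g‖ + ‖∑ g ∈ t \ s, u g‖ := norm_sub_le _ _
  _ ≤ ((s \ t).card : ℝ) + ((t \ s).card : ℝ) := add_le_add (key _) (key _)
  _ = ((t \ s).card : ℝ) + ((s \ t).card : ℝ) := by ring

set_option maxHeartbeats 1600000 in
lemma vdc_key (F : ℕ → Finset G) (hFne : ∀ n, (F n).Nonempty)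
    (hFol : ∀ g : G, Tendsto
      (fun n => ((((F n).image (fun x => g * x)) ∆ (F n)).card : ℝ) / (F n).card)
      atTop (nhds 0))
    (u : G → H) (hu : ∀ g, ‖u g‖ ≤ 1) (m : ℕ) :
    limsup (fun n => ‖((F n).card : ℝ)⁻¹ • ∑ g ∈ F n, u g‖ ^ 2) atTop ≤
      (((F m).card : ℝ) ^ 2)⁻¹ * ∑ h ∈ F m, ∑ k ∈ F m,
        limsup (fun n => |((F n).card : ℝ)⁻¹ * ∑ g ∈ F n, ⟪u (h * g), u (k * g)⟫_ℝ|) atTop := by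
  classical
  have hcard : ∀ n, (0:ℝ) < ((F n).card : ℝ) := fun n => by
    exact_mod_cast (hFne n).card_pos
  have hcne : ∀ n, ((F n).card : ℝ) ≠ 0 := fun n => (hcard n).ne'
  set cm : ℝ := ((F m).card : ℝ) with hcm
  -- the averaged family
  set v : G → H := fun g => cm⁻¹ • ∑ h ∈ F m, u (h * g) with hv_def
  have hv : ∀ g, ‖v g‖ ≤ 1 := fun g => vdc_avg_norm_le _ _ (fun h => hu _)
  -- inner products bounded
  have hinner : ∀ h k : G, ∀ n, |((F n).card : ℝ)⁻¹ * ∑ g ∈ F n, ⟪u (h * g), u (k * g)⟫_ℝ| ≤ 1 := by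
    intro h k n
    refine vdc_avg_abs_le _ _ fun g => ?_
    refine (abs_real_inner_le_norm _ _).trans ?_
    have h1 := hu (h * g); have h2 := hu (k * g)
    nlinarith [norm_nonneg (u (h * g)), norm_nonneg (u (k * g))]
  -- the comparison sequence
  set W : ℕ → ℝ := fun n => (cm ^ 2)⁻¹ * ∑ h ∈ F m, ∑ k ∈ F m,
      |((F n).card : ℝ)⁻¹ * ∑ g ∈ F n, ⟪u (h * g), u (k * g)⟫_ℝ| with hW_def
  have hW0 : ∀ n, 0 ≤ W n := fun n => by
    apply mul_nonneg (by positivity)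
    exact Finset.sum_nonneg fun h _ => Finset.sum_nonneg fun k _ => abs_nonneg _
  have hW1 : ∀ n, W n ≤ 1 := by
    intro n
    have : ∑ h ∈ F m, ∑ k ∈ F m,
        |((F n).card : ℝ)⁻¹ * ∑ g ∈ F n, ⟪u (h * g), u (k * g)⟫_ℝ| ≤ cm ^ 2 := by
      calc ∑ h ∈ F m, ∑ k ∈ F m, |((F n).card : ℝ)⁻¹ * ∑ g ∈ F n, ⟪u (h * g), u (k * g)⟫_ℝ|
          ≤ ∑ _h ∈ F m, ∑ _k ∈ F m, (1:ℝ) :=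
            Finset.sum_le_sum fun h _ => Finset.sum_le_sum fun k _ => hinner h k n
      _ = cm ^ 2 := by simp [hcm, sq]
    calc W n ≤ (cm ^ 2)⁻¹ * cm ^ 2 := by
          exact mul_le_mul_of_nonneg_left this (by positivity)
    _ ≤ 1 := by
          rw [inv_mul_cancel₀ (by positivity : (cm:ℝ)^2 ≠ 0)]
  -- pointwise Cauchy–Schwarz estimate
  have hAW : ∀ n, ‖((F n).card : ℝ)⁻¹ • ∑ g ∈ F n, v g‖ ^ 2 ≤ W n := by
    intro n
    set cn : ℝ := ((F n).card : ℝ) with hcn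
    have hvv : ∀ g : G, ‖v g‖ ^ 2 = (cm ^ 2)⁻¹ *
        ∑ h ∈ F m, ∑ k ∈ F m, ⟪u (h * g), u (k * g)⟫_ℝ := by
      intro g
      rw [← real_inner_self_eq_norm_sq]
      simp only [hv_def]
      rw [real_inner_smul_left, real_inner_smul_right, sum_inner]
      simp only [inner_sum]
      rw [sq, mul_inv]
      ring
    have step1 : ‖cn⁻¹ • ∑ g ∈ F n, v g‖ ^ 2 = (cn⁻¹) ^ 2 * ‖∑ g ∈ F n, v g‖ ^ 2 := by
      rw [norm_smul, mul_pow, norm_inv, hcn, Real.norm_natCast]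
    have step2 : ‖∑ g ∈ F n, v g‖ ^ 2 ≤ cn * ∑ g ∈ F n, ‖v g‖ ^ 2 := by
      calc ‖∑ g ∈ F n, v g‖ ^ 2 ≤ (∑ g ∈ F n, ‖v g‖) ^ 2 := by
            apply pow_le_pow_left₀ (norm_nonneg _) (norm_sum_le _ _)
      _ ≤ cn * ∑ g ∈ F n, ‖v g‖ ^ 2 := sq_sum_le_card_mul_sum_sq
    have step3 : (cn⁻¹) ^ 2 * (cn * ∑ g ∈ F n, ‖v g‖ ^ 2)
        = cn⁻¹ * ∑ g ∈ F n, ‖v g‖ ^ 2 := by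
      field_simp
    have step4 : cn⁻¹ * ∑ g ∈ F n, ‖v g‖ ^ 2 = (cm ^ 2)⁻¹ * ∑ h ∈ F m, ∑ k ∈ F m,
        (cn⁻¹ * ∑ g ∈ F n, ⟪u (h * g), u (k * g)⟫_ℝ) := by
      rw [Finset.sum_congr rfl fun g _ => hvv g]
      rw [← Finset.mul_sum]
      rw [show ∑ g ∈ F n, ∑ h ∈ F m, ∑ k ∈ F m, ⟪u (h * g), u (k * g)⟫_ℝ
          = ∑ h ∈ F m, ∑ k ∈ F m, ∑ g ∈ F n, ⟪u (h * g), u (k * g)⟫_ℝ by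
        rw [Finset.sum_comm]
        exact Finset.sum_congr rfl fun h _ => Finset.sum_comm]
      simp only [Finset.mul_sum]
      exact Finset.sum_congr rfl fun h _ => Finset.sum_congr rfl fun k _ =>
        Finset.sum_congr rfl fun g _ => by ring
    have step5 : (cm ^ 2)⁻¹ * (∑ h ∈ F m, ∑ k ∈ F m,
        (cn⁻¹ * ∑ g ∈ F n, ⟪u (h * g), u (k * g)⟫_ℝ)) ≤ W n := by
      apply mul_le_mul_of_nonneg_left _ (by positivity)
      exact Finset.sum_le_sum fun h _ => Finset.sum_le_sum fun k _ => le_abs_self _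
    calc ‖cn⁻¹ • ∑ g ∈ F n, v g‖ ^ 2 = (cn⁻¹) ^ 2 * ‖∑ g ∈ F n, v g‖ ^ 2 := step1
    _ ≤ (cn⁻¹) ^ 2 * (cn * ∑ g ∈ F n, ‖v g‖ ^ 2) := by
        apply mul_le_mul_of_nonneg_left step2 (by positivity)
    _ = cn⁻¹ * ∑ g ∈ F n, ‖v g‖ ^ 2 := step3
    _ = _ := step4
    _ ≤ W n := step5
  -- the Følner error
  set E : ℕ → ℝ := fun n => cm⁻¹ * ∑ h ∈ F m,
      ((((F n).image (fun x => h * x)) ∆ (F n)).card : ℝ) / ((F n).card : ℝ) with hE_def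
  have hE0 : ∀ n, 0 ≤ E n := fun n => by
    apply mul_nonneg (by positivity)
    exact Finset.sum_nonneg fun h _ => div_nonneg (by positivity) (by positivity)
  have hEtendsto : Tendsto E atTop (nhds 0) := by
    have h0 := Tendsto.const_mul (cm⁻¹)
      (tendsto_finset_sum (F m) (fun h (_ : h ∈ F m) => hFol h))
    rw [hE_def]
    simpa only [Finset.sum_const_zero, mul_zero] using h0
  have hdiff : ∀ n, ‖((F n).card : ℝ)⁻¹ • ∑ g ∈ F n, u g
      - ((F n).card : ℝ)⁻¹ • ∑ g ∈ F n, v g‖ ≤ E n := by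
    intro n
    set cn : ℝ := ((F n).card : ℝ) with hcn
    set S : H := ∑ g ∈ F n, u g with hS
    set T : G → H := fun h => ∑ g ∈ F n, u (h * g) with hT
    have himg : ∀ h : G, ∑ x ∈ (F n).image (fun x => h * x), u x = T h := by
      intro h
      rw [Finset.sum_image (fun x _ y _ hxy => by simpa using hxy)]
    have hTd : ∀ h : G, ‖S - T h‖ ≤ ((((F n).image (fun x => h * x)) ∆ (F n)).card : ℝ) := by
      intro h
      rw [← himg h]
      exact vdc_sum_diff_le u hu _ _
    have hsumv : ∑ g ∈ F n, v g = cm⁻¹ • ∑ h ∈ F m, T h := by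
      simp only [hv_def, ← Finset.smul_sum]
      rw [Finset.sum_comm]
    have hmain : ((F n).card : ℝ)⁻¹ • S - cn⁻¹ • (cm⁻¹ • ∑ h ∈ F m, T h)
        = (cn⁻¹ * cm⁻¹) • ∑ h ∈ F m, (S - T h) := by
      rw [Finset.sum_sub_distrib, Finset.sum_const, smul_sub, ← hcn]
      rw [← Nat.cast_smul_eq_nsmul ℝ (F m).card S, ← hcm]
      match_scalars <;> (field_simp [show cm ≠ 0 from hcne m, show cn ≠ 0 from hcne n]; try ring)
    rw [hsumv, hmain]
    calc ‖(cn⁻¹ * cm⁻¹) • ∑ h ∈ F m, (S - T h)‖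
        = (cn⁻¹ * cm⁻¹) * ‖∑ h ∈ F m, (S - T h)‖ := by
          rw [norm_smul, Real.norm_eq_abs, abs_of_nonneg (by positivity)]
    _ ≤ (cn⁻¹ * cm⁻¹) * ∑ h ∈ F m, ‖S - T h‖ := by
          apply mul_le_mul_of_nonneg_left (norm_sum_le _ _) (by positivity)
    _ ≤ (cn⁻¹ * cm⁻¹) * ∑ h ∈ F m,
          ((((F n).image (fun x => h * x)) ∆ (F n)).card : ℝ) := by
          apply mul_le_mul_of_nonneg_left (Finset.sum_le_sum fun h _ => hTd h) (by positivity)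
    _ = E n := by
          rw [hE_def]
          simp only [div_eq_mul_inv, ← Finset.sum_mul]
          ring
  -- put it together: for every ε > 0
  refine le_of_forall_pos_le_add fun ε hε => ?_
  have hev : ∀ᶠ n in atTop, ‖((F n).card : ℝ)⁻¹ • ∑ g ∈ F n, u g‖ ^ 2 ≤ W n + ε := by
    have hlt : ∀ᶠ n in atTop, E n < min 1 (ε / 3) :=
      hEtendsto.eventually_lt_const (by positivity)
    filter_upwards [hlt] with n hn
    have h1 : ‖((F n).card : ℝ)⁻¹ • ∑ g ∈ F n, u g‖
        ≤ ‖((F n).card : ℝ)⁻¹ • ∑ g ∈ F n, v g‖ + E n := by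
      calc ‖((F n).card : ℝ)⁻¹ • ∑ g ∈ F n, u g‖
          = ‖((F n).card : ℝ)⁻¹ • ∑ g ∈ F n, v g +
            (((F n).card : ℝ)⁻¹ • ∑ g ∈ F n, u g - ((F n).card : ℝ)⁻¹ • ∑ g ∈ F n, v g)‖ := by
            rw [add_sub_cancel]
      _ ≤ _ := (norm_add_le _ _).trans (add_le_add_right (hdiff n) _)
    have h2 : ‖((F n).card : ℝ)⁻¹ • ∑ g ∈ F n, v g‖ ≤ 1 := vdc_avg_norm_le _ _ hv
    have h3 := hAW n
    have h4 : 0 ≤ E n := hE0 n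
    have h5 : E n ≤ 1 := (hn.le.trans (min_le_left _ _))
    have h6 : E n ≤ ε / 3 := (hn.le.trans (min_le_right _ _))
    have h7 : (0:ℝ) ≤ ‖((F n).card : ℝ)⁻¹ • ∑ g ∈ F n, u g‖ := norm_nonneg _
    have h8 : (0:ℝ) ≤ ‖((F n).card : ℝ)⁻¹ • ∑ g ∈ F n, v g‖ := norm_nonneg _
    nlinarith [sq_nonneg (E n)]
  -- limsup estimates
  have l1 : limsup (fun n => ‖((F n).card : ℝ)⁻¹ • ∑ g ∈ F n, u g‖ ^ 2) atTop
      ≤ limsup (fun n => W n + ε) atTop := by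
    refine limsup_le_limsup hev ?_ ?_
    · exact (vdc_bddL (fun n => sq_nonneg _)).isCoboundedUnder_le
    · exact vdc_bddU (fun n => add_le_add (hW1 n) le_rfl)
  have l2 : limsup (fun n => W n + ε) atTop = limsup W atTop + ε :=
    limsup_add_const atTop W ε (vdc_bddU hW1) (vdc_bddL hW0).isCoboundedUnder_le
  have l3 : limsup W atTop ≤ (cm ^ 2)⁻¹ * ∑ h ∈ F m, ∑ k ∈ F m,
      limsup (fun n => |((F n).card : ℝ)⁻¹ * ∑ g ∈ F n, ⟪u (h * g), u (k * g)⟫_ℝ|) atTop := by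
    have hd0 : ∀ n, (0:ℝ) ≤ ∑ h ∈ F m, ∑ k ∈ F m,
        |((F n).card : ℝ)⁻¹ * ∑ g ∈ F n, ⟪u (h * g), u (k * g)⟫_ℝ| :=
      fun n => Finset.sum_nonneg fun h _ => Finset.sum_nonneg fun k _ => abs_nonneg _
    have hdbdd : ∀ n, ∑ h ∈ F m, ∑ k ∈ F m,
        |((F n).card : ℝ)⁻¹ * ∑ g ∈ F n, ⟪u (h * g), u (k * g)⟫_ℝ| ≤ cm * cm := fun n => by
      calc ∑ h ∈ F m, ∑ k ∈ F m, |((F n).card : ℝ)⁻¹ * ∑ g ∈ F n, ⟪u (h * g), u (k * g)⟫_ℝ|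
          ≤ ∑ _h ∈ F m, ∑ _k ∈ F m, (1:ℝ) :=
            Finset.sum_le_sum fun h _ => Finset.sum_le_sum fun k _ => hinner h k n
      _ = cm * cm := by simp [hcm]
    have e1 : limsup W atTop = (cm ^ 2)⁻¹ * limsup (fun n => ∑ h ∈ F m, ∑ k ∈ F m,
        |((F n).card : ℝ)⁻¹ * ∑ g ∈ F n, ⟪u (h * g), u (k * g)⟫_ℝ|) atTop := by
      rw [hW_def]
      exact vdc_limsup_const_mul _ (by positivity) _ (vdc_bddU hdbdd)
        (vdc_bddL hd0).isCoboundedUnder_le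
    rw [e1]
    apply mul_le_mul_of_nonneg_left _ (by positivity)
    calc limsup (fun n => ∑ h ∈ F m, ∑ k ∈ F m,
            |((F n).card : ℝ)⁻¹ * ∑ g ∈ F n, ⟪u (h * g), u (k * g)⟫_ℝ|) atTop
        ≤ ∑ h ∈ F m, limsup (fun n => ∑ k ∈ F m,
            |((F n).card : ℝ)⁻¹ * ∑ g ∈ F n, ⟪u (h * g), u (k * g)⟫_ℝ|) atTop := by
          refine vdc_limsup_sum_le _ _ cm
            (fun h _ n => Finset.sum_nonneg fun k _ => abs_nonneg _)
            (fun h _ n => ?_)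
          calc ∑ k ∈ F m, |((F n).card : ℝ)⁻¹ * ∑ g ∈ F n, ⟪u (h * g), u (k * g)⟫_ℝ|
              ≤ ∑ _k ∈ F m, (1:ℝ) := Finset.sum_le_sum fun k _ => hinner h k n
          _ = cm := by simp [hcm]
    _ ≤ ∑ h ∈ F m, ∑ k ∈ F m,
          limsup (fun n => |((F n).card : ℝ)⁻¹ * ∑ g ∈ F n, ⟪u (h * g), u (k * g)⟫_ℝ|) atTop := by
          refine Finset.sum_le_sum fun h _ => ?_
          exact vdc_limsup_sum_le _ _ 1 (fun k _ n => abs_nonneg _) (fun k _ n => hinner h k n)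
  calc limsup (fun n => ‖((F n).card : ℝ)⁻¹ • ∑ g ∈ F n, u g‖ ^ 2) atTop
      ≤ limsup W atTop + ε := l1.trans l2.le
  _ ≤ _ := add_le_add_left l3 ε

end Key

/-- The van der Corput estimate for countable amenable groups (Bergelson–McCutcheon–Zhang):
for a family `(u_g)_{g ∈ G}` of vectors of norm at most `1` in a Hilbert space and a left
Følner sequence `(F_n)`,
`limsup_n ‖|F_n|⁻¹ ∑_{g∈F_n} u_g‖² ≤
  limsup_m |F_m|⁻² ∑_{h,k∈F_m} limsup_n ||F_n|⁻¹ ∑_{g∈F_n} ⟪u_{hg}, u_{kg}⟫|`. -/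
theorem van_der_corput_amenable {G : Type} [Group G] [Countable G] [DecidableEq G]
    {H : Type} [NormedAddCommGroup H] [InnerProductSpace ℝ H]
    (F : ℕ → Finset G) (hFne : ∀ n, (F n).Nonempty)
    (hFol : ∀ g : G, Tendsto
      (fun n => ((((F n).image (fun x => g * x)) ∆ (F n)).card : ℝ) / (F n).card)
      atTop (nhds 0))
    (u : G → H) (hu : ∀ g, ‖u g‖ ≤ 1) :
    limsup (fun n => ‖((F n).card : ℝ)⁻¹ • ∑ g ∈ F n, u g‖ ^ 2) atTop ≤
    limsup (fun m => (((F m).card : ℝ) ^ 2)⁻¹ *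
      ∑ h ∈ F m, ∑ k ∈ F m,
        limsup (fun n => |((F n).card : ℝ)⁻¹ * ∑ g ∈ F n, ⟪u (h * g), u (k * g)⟫_ℝ|) atTop)
      atTop := by
  have hinner : ∀ h k : G, ∀ n, |((F n).card : ℝ)⁻¹ * ∑ g ∈ F n, ⟪u (h * g), u (k * g)⟫_ℝ| ≤ 1 := by
    intro h k n
    refine vdc_avg_abs_le _ _ fun g => ?_
    refine (abs_real_inner_le_norm _ _).trans ?_
    have h1 := hu (h * g); have h2 := hu (k * g)
    nlinarith [norm_nonneg (u (h * g)), norm_nonneg (u (k * g))]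
  have hBbdd : ∀ m : ℕ, (((F m).card : ℝ) ^ 2)⁻¹ *
      ∑ h ∈ F m, ∑ k ∈ F m,
        limsup (fun n => |((F n).card : ℝ)⁻¹ * ∑ g ∈ F n, ⟪u (h * g), u (k * g)⟫_ℝ|) atTop ≤ 1 := by
    intro m
    have hC1 : ∀ h k : G,
        limsup (fun n => |((F n).card : ℝ)⁻¹ * ∑ g ∈ F n, ⟪u (h * g), u (k * g)⟫_ℝ|) atTop ≤ 1 :=
      fun h k => limsup_le_of_le (vdc_bddL (fun n => abs_nonneg _)).isCoboundedUnder_le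
        (Eventually.of_forall fun n => hinner h k n)
    have : ∑ h ∈ F m, ∑ k ∈ F m,
        limsup (fun n => |((F n).card : ℝ)⁻¹ * ∑ g ∈ F n, ⟪u (h * g), u (k * g)⟫_ℝ|) atTop
        ≤ (((F m).card : ℝ)) ^ 2 := by
      calc _ ≤ ∑ _h ∈ F m, ∑ _k ∈ F m, (1:ℝ) :=
            Finset.sum_le_sum fun h _ => Finset.sum_le_sum fun k _ => hC1 h k
      _ = (((F m).card : ℝ)) ^ 2 := by simp [sq]
    have hpos : (0:ℝ) < ((F m).card : ℝ) := by exact_mod_cast (hFne m).card_pos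
    calc _ ≤ ((((F m).card : ℝ)) ^ 2)⁻¹ * (((F m).card : ℝ)) ^ 2 :=
          mul_le_mul_of_nonneg_left this (by positivity)
    _ ≤ 1 := by rw [inv_mul_cancel₀ (by positivity)]
  exact le_limsup_of_frequently_le
    (Frequently.of_forall fun m => vdc_key F hFne hFol u hu m)
    (vdc_bddU hBbdd)
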